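/- Let P be a poset such that mxl(P) is finite and is a cutset of P. Then the poset 𝒟(P) = Γ(P, mxl(P)), ordered by inclusion, has no infinite ascending chains. -/
import Mathlib


variable {α : Type*}

def belowSet [PartialOrder α] (A : Set α) : Set α := {p | ∃ a ∈ A, p ≤ a}

def aboveSet [PartialOrder α] (A : Set α) : Set α := {p | ∃ a ∈ A, a ≤ p}

def connRel [PartialOrder α] (S : Set α) (x y : α) : Prop :=
  Relation.ReflTransGen (fun a b => a ∈ S ∧ b ∈ S ∧ (a ≤ b ∨ b ≤ a)) x y

def connComp [PartialOrder α] (S : Set α) (x : α) : Set α := {y | connRel S x y}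

def IsConnSub [PartialOrder α] (S : Set α) : Prop :=
  S.Nonempty ∧ ∀ x ∈ S, ∀ y ∈ S, connRel S x y

def IsConnCompOf [PartialOrder α] (S C : Set α) : Prop := ∃ x ∈ S, C = connComp S x

def crosscut [PartialOrder α] (X : Set α) : Set (Set α) :=
  {C | ∃ A : Set α, A ⊆ X ∧ A.Nonempty ∧ IsConnCompOf (belowSet A) C}

def crosscutU [PartialOrder α] (X : Set α) : Set (Set α) :=
  {C | ∃ A : Set α, A ⊆ X ∧ A.Nonempty ∧ IsConnCompOf (aboveSet A) C}

def mxl (α : Type*) [PartialOrder α] : Set α := {a | IsMax a}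
def mnl (α : Type*) [PartialOrder α] : Set α := {a | IsMin a}

def DSet (α : Type*) [PartialOrder α] : Set (Set α) := crosscut (mxl α)
def USet (α : Type*) [PartialOrder α] : Set (Set α) := crosscutU (mnl α)

def FPP (β : Type*) [Preorder β] : Prop := ∀ f : β → β, Monotone f → ∃ x, f x = x

section auxlem
variable [PartialOrder α]

lemma connRel_mono {S T : Set α} (h : S ⊆ T) {x y : α} (hxy : connRel S x y) :
    connRel T x y := by
  induction hxy with
  | refl => exact Relation.ReflTransGen.refl
  | tail _ hbc ih => exact ih.tail ⟨h hbc.1, h hbc.2.1, hbc.2.2⟩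

lemma connRel_symm {S : Set α} {x y : α} (hxy : connRel S x y) : connRel S y x := by
  induction hxy with
  | refl => exact Relation.ReflTransGen.refl
  | tail _ hbc ih =>
      exact Relation.ReflTransGen.trans
        (Relation.ReflTransGen.single ⟨hbc.2.1, hbc.1, hbc.2.2.symm⟩) ih

lemma connRel_mem {S : Set α} {x y : α} (hxy : connRel S x y) (hx : x ∈ S) : y ∈ S := by
  induction hxy with
  | refl => exact hx
  | tail _ hbc _ => exact hbc.2.1

lemma connRel_restrict {S T : Set α} {x y : α} (hxy : connRel S x y)
    (hT : ∀ z, connRel S x z → z ∈ T) : connRel T x y := by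
  induction hxy with
  | refl => exact Relation.ReflTransGen.refl
  | @tail b c hb hbc ih =>
      exact ih.tail ⟨hT b hb, hT c (hb.tail hbc), hbc.2.2⟩

lemma DSet_key {C : Set α} (hC : C ∈ DSet α) :
    ∀ x ∈ C, C = connComp (belowSet (C ∩ mxl α)) x := by
  obtain ⟨A, hA, -, x₀, hx₀, rfl⟩ := hC
  set S := belowSet A with hS
  set C := connComp S x₀ with hCdef
  have hCS : C ⊆ S := fun y hy => connRel_mem hy hx₀
  have hCbM : C ⊆ belowSet (C ∩ mxl α) := by
    intro x hx
    obtain ⟨a, haA, hxa⟩ := hCS hx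
    have haS : a ∈ S := ⟨a, haA, le_rfl⟩
    have haC : a ∈ C := Relation.ReflTransGen.tail hx ⟨hCS hx, haS, Or.inl hxa⟩
    exact ⟨a, ⟨haC, hA haA⟩, hxa⟩
  have hbMS : belowSet (C ∩ mxl α) ⊆ S := by
    rintro p ⟨m, ⟨hmC, -⟩, hpm⟩
    obtain ⟨a, haA, hma⟩ := hCS hmC
    exact ⟨a, haA, hpm.trans hma⟩
  intro x hx
  ext y
  constructor
  · intro hy
    have hxy : connRel S x y := (connRel_symm hx).trans hy
    exact connRel_restrict hxy (fun z hz => hCbM (Relation.ReflTransGen.trans hx hz))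
  · intro hy
    exact Relation.ReflTransGen.trans hx (connRel_mono hbMS hy)

lemma DSet_nonempty {C : Set α} (hC : C ∈ DSet α) : C.Nonempty := by
  obtain ⟨A, -, -, x₀, -, rfl⟩ := hC
  exact ⟨x₀, Relation.ReflTransGen.refl⟩

lemma DSet_strict {C₁ C₂ : Set α} (h1 : C₁ ∈ DSet α) (h2 : C₂ ∈ DSet α) (h : C₁ ⊂ C₂) :
    C₁ ∩ mxl α ⊂ C₂ ∩ mxl α := by
  refine ⟨Set.inter_subset_inter_left _ h.1, fun hsub => h.2 ?_⟩
  have hM : C₁ ∩ mxl α = C₂ ∩ mxl α :=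
    Set.Subset.antisymm (Set.inter_subset_inter_left _ h.1) hsub
  obtain ⟨x, hx1⟩ := DSet_nonempty h1
  have hx2 : x ∈ C₂ := h.1 hx1
  have heq : C₂ = C₁ := calc C₂ = connComp (belowSet (C₂ ∩ mxl α)) x := DSet_key h2 x hx2
    _ = connComp (belowSet (C₁ ∩ mxl α)) x := by rw [hM]
    _ = C₁ := (DSet_key h1 x hx1).symm
  exact le_of_eq heq

end auxlem

theorem stmt12 [PartialOrder α]
    (hfin : (mxl α).Finite)
    (hcut : ∀ x : α, ∃ m ∈ mxl α, x ≤ m) :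
    ¬ ∃ c : ℕ → Set α, (∀ n, c n ∈ DSet α) ∧ ∀ n, c n ⊂ c (n + 1) := by
  rintro ⟨c, hmem, hchain⟩
  have hstrict : ∀ n, (c n ∩ mxl α) ⊂ (c (n + 1) ∩ mxl α) := fun n =>
    DSet_strict (hmem n) (hmem (n + 1)) (hchain n)
  have hmono : StrictMono (fun n => (c n ∩ mxl α).ncard) :=
    strictMono_nat_of_lt_succ fun n =>
      Set.ncard_lt_ncard (hstrict n) (hfin.subset Set.inter_subset_right)
  have h1 : ∀ n, n ≤ (c n ∩ mxl α).ncard := fun n => hmono.le_apply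
  have h2 : ∀ n, (c n ∩ mxl α).ncard ≤ (mxl α).ncard := fun n =>
    Set.ncard_le_ncard Set.inter_subset_right hfin
  have := h1 ((mxl α).ncard + 1)
  have := h2 ((mxl α).ncard + 1)
  omega
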